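/- Let N ≥ 1 be an integer, m > 1 and r > 0. For 0 < |x| < r set η(x) = √(r² − |x|²), D(x) = √( η(x)² (1+η(x))² + |x|² ) and E(x) = (1+η(x))² + η(x)(1+η(x)) − 1. Then the vector field V(x) = − (1+η(x))^m x / D(x) satisfies, for every x with 0 < |x| < r, the identity div V(x) = − ( N (1+η)^m / D + |x|² (1+η)^m E / D³ − m |x|² (1+η)^{m−1} / (η D) ), where η, D, E are evaluated at x. -/

import Mathlib

open RealInnerProductSpace

noncomputable section

/-- Classical divergence of a vector field on `ℝ^N`: the sum of the partial
derivatives of the components. -/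
def divergence {N : ℕ} (V : EuclideanSpace ℝ (Fin N) → EuclideanSpace ℝ (Fin N))
    (x : EuclideanSpace ℝ (Fin N)) : ℝ :=
  ∑ i, ⟪fderiv ℝ V x (EuclideanSpace.single i 1), EuclideanSpace.single i 1⟫

/-- `η(x) = √(r² − |x|²)`. -/
def ηf {N : ℕ} (r : ℝ) (x : EuclideanSpace ℝ (Fin N)) : ℝ :=
  Real.sqrt (r ^ 2 - ‖x‖ ^ 2)

/-- `D(x) = √(η²(1+η)² + |x|²)`. -/
def Df {N : ℕ} (r : ℝ) (x : EuclideanSpace ℝ (Fin N)) : ℝ :=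
  Real.sqrt ((ηf r x) ^ 2 * (1 + ηf r x) ^ 2 + ‖x‖ ^ 2)

/-- `E(x) = (1+η)² + η(1+η) − 1`. -/
def Ef {N : ℕ} (r : ℝ) (x : EuclideanSpace ℝ (Fin N)) : ℝ :=
  (1 + ηf r x) ^ 2 + ηf r x * (1 + ηf r x) - 1

/-- the vector field `V(x) = −(1+η)^m x / D` satisfies, for `0 < |x| < r`,
`div V(x) = −( N(1+η)^m/D + |x|²(1+η)^m E/D³ − m|x|²(1+η)^{m−1}/(ηD) )`. -/
theorem stmt_14 (N : ℕ) (hN : 1 ≤ N) (m r : ℝ) (hm : 1 < m) (hr : 0 < r) :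
    ∀ x : EuclideanSpace ℝ (Fin N), 0 < ‖x‖ → ‖x‖ < r →
      divergence (fun z => (-((1 + ηf r z) ^ m / Df r z)) • z) x =
        -(N * (1 + ηf r x) ^ m / Df r x
          + ‖x‖ ^ 2 * (1 + ηf r x) ^ m * Ef r x / (Df r x) ^ 3
          - m * ‖x‖ ^ 2 * (1 + ηf r x) ^ (m - 1) / (ηf r x * Df r x)) := by
  intro x hx hxr
  have hs0 : (0:ℝ) < ‖x‖ ^ 2 := by positivity
  have hsr : ‖x‖ ^ 2 < r ^ 2 := by nlinarith
  set s : ℝ := ‖x‖ ^ 2 with hs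
  have hE0 : 0 < ηf r x := Real.sqrt_pos.2 (by linarith)
  set E : ℝ := ηf r x with hEdef
  have hEsq : E ^ 2 = r ^ 2 - s := Real.sq_sqrt (by linarith)
  have hE1 : (0:ℝ) < 1 + E := by linarith
  have hD0 : 0 < Df r x := Real.sqrt_pos.2 (by nlinarith [sq_nonneg (E * (1 + E))])
  set Dv : ℝ := Df r x with hDdef
  -- the scalar profile function of t = ‖z‖²
  set η' : ℝ := -1 / (2 * E) with hη'
  set P' : ℝ := (2 * E ^ 1 * η' * (1 + E) ^ 2 + E ^ 2 * (2 * (1 + E) ^ 1 * η')) + 1 with hP'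
  set A : ℝ := (1 + E) ^ m with hA
  set B : ℝ := (1 + E) ^ (m - 1) with hB
  set A' : ℝ := m * B * η' with hA'd
  set D' : ℝ := P' / (2 * Dv) with hD'
  set g' : ℝ := -((A' * Dv - A * D') / Dv ^ 2) with hg'
  have hηs : Real.sqrt (r ^ 2 - s) = E := rfl
  have hηd : HasDerivAt (fun t : ℝ => Real.sqrt (r ^ 2 - t)) η' s := by
    have h1 : HasDerivAt (fun t : ℝ => r ^ 2 - t) (-1) s := by
      simpa using (hasDerivAt_id s).const_sub (r ^ 2)
    have h2 := h1.sqrt (by intro h; nlinarith)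
    rw [hη', ← hηs]
    exact h2
  have hAd : HasDerivAt (fun t : ℝ => (1 + Real.sqrt (r ^ 2 - t)) ^ m) A' s := by
    have h1 : HasDerivAt (fun t : ℝ => 1 + Real.sqrt (r ^ 2 - t)) η' s := hηd.const_add 1
    have h2 := (Real.hasDerivAt_rpow_const (x := 1 + Real.sqrt (r ^ 2 - s))
        (p := m) (Or.inl (by rw [hηs]; linarith))).comp s h1
    simpa [hηs, hA'd, hB, mul_comm, mul_assoc, Function.comp_def] using h2
  have hPd : HasDerivAt
      (fun t : ℝ => (Real.sqrt (r ^ 2 - t)) ^ 2 * (1 + Real.sqrt (r ^ 2 - t)) ^ 2 + t)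
      P' s := by
    have h1 : HasDerivAt
        (fun t : ℝ => (Real.sqrt (r ^ 2 - t)) ^ 2 * (1 + Real.sqrt (r ^ 2 - t)) ^ 2 + t) _ s :=
      ((hηd.pow 2).mul ((hηd.const_add 1).pow 2)).add (hasDerivAt_id s)
    simpa [hηs, hP'] using h1
  have hPs : (Real.sqrt (r ^ 2 - s)) ^ 2 * (1 + Real.sqrt (r ^ 2 - s)) ^ 2 + s
      = E ^ 2 * (1 + E) ^ 2 + s := by rw [hηs]
  have hDvs : Real.sqrt (E ^ 2 * (1 + E) ^ 2 + s) = Dv := rfl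
  have hDd : HasDerivAt
      (fun t : ℝ => Real.sqrt ((Real.sqrt (r ^ 2 - t)) ^ 2 * (1 + Real.sqrt (r ^ 2 - t)) ^ 2 + t))
      D' s := by
    have := hPd.sqrt (by rw [hPs]; nlinarith)
    simpa [hPs, hDvs, hD', div_eq_mul_inv] using this
  have hgd : HasDerivAt
      (fun t : ℝ => -((1 + Real.sqrt (r ^ 2 - t)) ^ m /
        Real.sqrt ((Real.sqrt (r ^ 2 - t)) ^ 2 * (1 + Real.sqrt (r ^ 2 - t)) ^ 2 + t)))
      g' s := by
    have : HasDerivAt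
        (fun t : ℝ => -((1 + Real.sqrt (r ^ 2 - t)) ^ m /
          Real.sqrt ((Real.sqrt (r ^ 2 - t)) ^ 2 * (1 + Real.sqrt (r ^ 2 - t)) ^ 2 + t))) _ s :=
      (hAd.div hDd (by rw [hPs, hDvs]; exact ne_of_gt hD0)).neg
    simpa [hηs, hPs, hDvs, hA, hg'] using this
  -- full vector field derivative
  have hnsq : HasFDerivAt (fun z : EuclideanSpace ℝ (Fin N) => ‖z‖ ^ 2)
      (2 • (innerSL ℝ x)) x := (hasStrictFDerivAt_norm_sq x).hasFDerivAt
  have hc : HasFDerivAt (fun z : EuclideanSpace ℝ (Fin N) =>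
      -((1 + Real.sqrt (r ^ 2 - ‖z‖ ^ 2)) ^ m /
        Real.sqrt ((Real.sqrt (r ^ 2 - ‖z‖ ^ 2)) ^ 2 * (1 + Real.sqrt (r ^ 2 - ‖z‖ ^ 2)) ^ 2 + ‖z‖ ^ 2)))
      (g' • (2 • (innerSL ℝ x))) x := by
    have := hgd.comp_hasFDerivAt x hnsq
    exact this
  have hVd : HasFDerivAt (fun z : EuclideanSpace ℝ (Fin N) => (-((1 + ηf r z) ^ m / Df r z)) • z)
      ((-(A / Dv)) • ContinuousLinearMap.id ℝ (EuclideanSpace ℝ (Fin N))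
        + (g' • (2 • (innerSL ℝ x))).smulRight x) x := hc.smul (hasFDerivAt_id x)
  -- compute the divergence
  rw [divergence, hVd.fderiv]
  have hsum : ∀ i : Fin N,
      ⟪((-(A / Dv)) • ContinuousLinearMap.id ℝ (EuclideanSpace ℝ (Fin N))
        + (g' • (2 • (innerSL ℝ x))).smulRight x) (EuclideanSpace.single i 1),
        EuclideanSpace.single i 1⟫
      = -(A / Dv) + 2 * g' * (x i * x i) := by
    intro i
    have he : ⟪(EuclideanSpace.single i (1:ℝ) : EuclideanSpace ℝ (Fin N)),
        EuclideanSpace.single i (1:ℝ)⟫ = 1 := by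
      rw [EuclideanSpace.inner_single_left]
      simp [EuclideanSpace.single_apply]
    have hxe : ⟪x, (EuclideanSpace.single i (1:ℝ) : EuclideanSpace ℝ (Fin N))⟫ = x i := by
      rw [EuclideanSpace.inner_single_right]
      simp
    rw [ContinuousLinearMap.add_apply, ContinuousLinearMap.smul_apply,
      ContinuousLinearMap.id_apply, ContinuousLinearMap.smulRight_apply,
      inner_add_left, real_inner_smul_left, real_inner_smul_left,
      ContinuousLinearMap.smul_apply, ContinuousLinearMap.smul_apply, innerSL_apply_apply,
      he, hxe, smul_eq_mul, nsmul_eq_mul]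
    push_cast
    ring
  rw [Finset.sum_congr rfl fun i _ => hsum i, Finset.sum_add_distrib,
    Finset.sum_const, ← Finset.mul_sum]
  have hxs : ∑ i : Fin N, x i * x i = s := by
    have h := real_inner_self_eq_norm_sq x
    rw [PiLp.inner_apply] at h
    simpa [RCLike.inner_apply, conj_trivial, ← sq, hs] using h
  rw [hxs]
  simp only [Finset.card_univ, Fintype.card_fin, nsmul_eq_mul]
  -- final algebraic identity
  have hAB : A = B * (1 + E) := by
    rw [hA, hB, ← Real.rpow_add_one (ne_of_gt hE1)]
    congr 1
    ring
  have hDvne : Dv ≠ 0 := ne_of_gt hD0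
  have hEne : E ≠ 0 := ne_of_gt hE0
  rw [Ef, ← hEdef]
  rw [hg', hD', hA'd, hP', hη', hAB]
  field_simp
  ring

end
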